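/- Let ε, δ > 0 and α, β, ρ, σ : ℤ → ℝ be sequences. Define b_n = ε Σ_k^n β_k and s_m = δ Σ_k^m σ_k (bidirectional sums), and set ω^m_n = (1 − b_n s_m) α_{n+1} ρ_{m+1}, A_n = α_{n+1} α_n β_n, B_m = ρ_{m+1} ρ_m σ_m. Then for all (n, m) ∈ ℤ²: ω^{m+1}_{n+1} ω^m_n − ω^m_{n+1} ω^{m+1}_n + εδ A_{n+1} B_{m+1} = 0. -/

import Mathlib

/-- Bidirectional sum: `Σ_k^n x_k = Σ_{k=1}^n x_k` for `n ≥ 1`, `0` for `n = 0`, and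
`−Σ_{k=n+1}^0 x_k` for `n ≤ −1`. -/
noncomputable def bsum (x : ℤ → ℝ) (n : ℤ) : ℝ :=
  if 1 ≤ n then ∑ k ∈ Finset.Icc (1:ℤ) n, x k
  else if n = 0 then 0
  else -∑ k ∈ Finset.Icc (n+1) (0:ℤ), x k

lemma bsum_succ (x : ℤ → ℝ) (n : ℤ) : bsum x (n+1) = bsum x n + x (n+1) := by
  unfold bsum
  rcases lt_trichotomy n 0 with h | h | h
  · rcases eq_or_lt_of_le (by omega : n ≤ -1) with h1 | h1
    · subst h1; norm_num
    · have h2 : ¬ (1 ≤ n) := by omega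
      have h3 : ¬ (1 ≤ n+1) := by omega
      have h4 : ¬ (n+1 = 0) := by omega
      have h5 : n ≠ 0 := by omega
      simp only [h2, h3, h4, h5, if_false, if_neg]
      have he : Finset.Icc (n+1) (0:ℤ) = insert (n+1) (Finset.Icc (n+1+1) 0) := by
        ext k; simp; omega
      rw [he, Finset.sum_insert (by simp)]; ring
  · subst h; norm_num
  · have h1 : (1:ℤ) ≤ n := h
    have h2 : (1:ℤ) ≤ n+1 := by omega
    simp only [h1, h2, if_true]
    have he : Finset.Icc (1:ℤ) (n+1) = insert (n+1) (Finset.Icc 1 n) := by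
      ext k; simp; omega
    rw [he, Finset.sum_insert (by simp)]; ring

/-- The data `ω^m_n = (1 − b_n s_m) α_{n+1} ρ_{m+1}`, `A_n = α_{n+1}α_nβ_n`,
`B_m = ρ_{m+1}ρ_mσ_m` solves the discrete Liouville equation
`ω^{m+1}_{n+1}ω^m_n − ω^m_{n+1}ω^{m+1}_n + εδA_{n+1}B_{m+1} = 0`.
Here `ω n m` denotes `ω^m_n`. -/
theorem stmt11 (ε δ : ℝ) (hε : 0 < ε) (hδ : 0 < δ)
    (α β ρ σ : ℤ → ℝ) (b s : ℤ → ℝ)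
    (hb : ∀ n, b n = ε * bsum β n)
    (hs : ∀ m, s m = δ * bsum σ m)
    (ω : ℤ → ℤ → ℝ) (A B : ℤ → ℝ)
    (hω : ∀ n m, ω n m = (1 - b n * s m) * α (n+1) * ρ (m+1))
    (hA : ∀ n, A n = α (n+1) * α n * β n)
    (hB : ∀ m, B m = ρ (m+1) * ρ m * σ m) :
    ∀ n m : ℤ,
      ω (n+1) (m+1) * ω n m - ω (n+1) m * ω n (m+1)
        + ε * δ * A (n+1) * B (m+1) = 0 := by
  intro n m
  have hbn : b (n+1) = b n + ε * β (n+1) := by rw [hb, hb, bsum_succ]; ring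
  have hsm : s (m+1) = s m + δ * σ (m+1) := by rw [hs, hs, bsum_succ]; ring
  simp only [hω, hA, hB, hbn, hsm]
  ring
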